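/- The unnormalized zero-flux toric code ground state Φ = (∏_v (1/2)(1 + B_v)) δ₀ satisfies: Φ ≠ 0; A_{(x,y)} Φ = Φ for every plaquette (x,y); B_{(x,y)} Φ = Φ for every star (x,y); W_{Γ_x} Φ = Φ for every column x; and W_{Γ^h_y} Φ = Φ for every row y. In particular Φ is a ground state of the toric code Hamiltonian with trivial Wilson loop quantum numbers. -/

import Mathlib

open Finset

noncomputable section

/-- The Hilbert space of qubits at the elements of `ι`. -/
abbrev QubitSpace (ι : Type*) := (ι → ZMod 2) → ℂ

/-- Indicator function of a finset, valued in `ZMod 2`. -/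
def indicZ2 {ι : Type*} [DecidableEq ι] (S : Finset ι) : ι → ZMod 2 :=
  fun b => if b ∈ S then 1 else 0

/-- The Z-type operator `W_S`. -/
def Wop {ι : Type*} [DecidableEq ι] (S : Finset ι) :
    Module.End ℂ (QubitSpace ι) where
  toFun ψ := fun σ => (-1 : ℂ) ^ (∑ b ∈ S, σ b).val * ψ σ
  map_add' ψ φ := by funext σ; simp [mul_add]
  map_smul' c ψ := by funext σ; simp; ring

/-- The X-type operator `V_S`. -/
def Vop {ι : Type*} [DecidableEq ι] (S : Finset ι) :
    Module.End ℂ (QubitSpace ι) where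
  toFun ψ := fun σ => ψ (σ + indicZ2 S)
  map_add' _ _ := rfl
  map_smul' _ _ := rfl

/-- The inner product `⟨ψ, φ⟩ = ∑_σ conj (ψ σ) · φ σ`. -/
def qInner {ι : Type*} [Fintype ι] [DecidableEq ι] (ψ φ : QubitSpace ι) : ℂ :=
  ∑ σ, (starRingEnd ℂ) (ψ σ) * φ σ

/-- Square root of an involution: `W^{1/2} = (1/2)(1+W) + (i/2)(1−W)`. -/
def sqrtInv {E : Type*} [AddCommGroup E] [Module ℂ E] (W : Module.End ℂ E) :
    Module.End ℂ E :=
  ((2 : ℂ)⁻¹) • (1 + W) + (Complex.I * (2 : ℂ)⁻¹) • (1 - W)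

/-- `W^{a/2}` for `a ∈ {0,1}`: the identity if `a = 0`, `W^{1/2}` if `a = 1`. -/
def halfPow {E : Type*} [AddCommGroup E] [Module ℂ E] (W : Module.End ℂ E)
    (a : ℕ) : Module.End ℂ E :=
  if a = 0 then 1 else sqrtInv W

/-- The post-strategy state `ψ' = (∏_j W_{Γ_j}^{a_j/2}) ψ` (the factors are
commuting diagonal operators, so the order of the product is immaterial). -/
def postState {ι : Type*} [DecidableEq ι] {T : ℕ} (Γ : Fin T → Finset ι)
    (a : Fin T → ℕ) (ψ : QubitSpace ι) : QubitSpace ι :=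
  ((List.ofFn fun j => halfPow (Wop (Γ j)) (a j)).prod) ψ

/-- The X-basis vector `χ_y(σ) = 2^{−|ι|/2} (−1)^{∑_b σ(b)·y(b)}`. -/
def chi {ι : Type*} [Fintype ι] (y : ι → ZMod 2) : QubitSpace ι :=
  fun σ => (((Real.sqrt 2 ^ Fintype.card ι)⁻¹ : ℝ) : ℂ) *
    (-1 : ℂ) ^ (∑ b, (σ b).val * (y b).val)

/-- `r = ((∑_j a_j)/2) mod 2 ∈ ZMod 2`. -/
def rOf {T : ℕ} (a : Fin T → ℕ) : ZMod 2 := (((∑ j, a j) / 2 : ℕ) : ZMod 2)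

/-- The winning probability on input `a`:
`p(ψ, a) = ∑_{y : ∑_{b ∈ Γ̃} y b = r} |⟨χ_y, ψ'⟩|²`. -/
def winProb {ι : Type*} [Fintype ι] [DecidableEq ι] {T : ℕ}
    (Γ : Fin T → Finset ι) (Γt : Finset ι) (a : Fin T → ℕ)
    (ψ : QubitSpace ι) : ℝ :=
  ∑ y ∈ univ.filter (fun y : ι → ZMod 2 => ∑ b ∈ Γt, y b = rOf a),
    ‖qInner (chi y) (postState Γ a ψ)‖ ^ 2

/-- The quantum winning probability: the average of `p(ψ, a)` over the
`2^{T−1}` valid inputs `a` (those with `∑_j a_j` even). -/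
def quantumWinProb {ι : Type*} [Fintype ι] [DecidableEq ι] {T : ℕ}
    (Γ : Fin T → Finset ι) (Γt : Finset ι) (ψ : QubitSpace ι) : ℝ :=
  (∑ a ∈ univ.filter (fun a : Fin T → Fin 2 => Even (∑ j, (a j : ℕ))),
      winProb Γ Γt (fun j => (a j : ℕ)) ψ) / 2 ^ (T - 1)

/-- The computational basis vector `δ_σ`. -/
def deltaVec {ι : Type*} [DecidableEq (ι → ZMod 2)] (σ : ι → ZMod 2) :
    QubitSpace ι :=
  fun τ => if τ = σ then 1 else 0

/-! ### The square lattice on the torus -/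

variable (Lx Ly : ℕ)

/-- Vertices of the `L_x × L_y` square lattice on the torus. -/
abbrev Vertex := ZMod Lx × ZMod Ly

/-- Bonds of the lattice: `((x,y), 0)` is the horizontal bond from `(x,y)` to
`(x+1,y)`, and `((x,y), 1)` the vertical bond from `(x,y)` to `(x,y+1)`. -/
abbrev Bond := (ZMod Lx × ZMod Ly) × Fin 2

variable [NeZero Lx] [NeZero Ly]

/-- The vertical Wilson loop `Γ_x = {((x,y),1) : y}`. -/
def gammaV (x : ZMod Lx) : Finset (Bond Lx Ly) :=
  univ.filter (fun b => b.1.1 = x ∧ b.2 = 1)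

/-- The horizontal Wilson loop `Γ^h_y = {((x,y),0) : x}`. -/
def gammaH (y : ZMod Ly) : Finset (Bond Lx Ly) :=
  univ.filter (fun b => b.1.2 = y ∧ b.2 = 0)

/-- The horizontal dual loop `Γ̃_y = {((x,y),1) : x}`. -/
def dualH (y : ZMod Ly) : Finset (Bond Lx Ly) :=
  univ.filter (fun b => b.1.2 = y ∧ b.2 = 1)

/-- The vertical dual loop `Δ_x = {((x,y),0) : y}`. -/
def dualV (x : ZMod Lx) : Finset (Bond Lx Ly) :=
  univ.filter (fun b => b.1.1 = x ∧ b.2 = 0)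

/-- The plaquette `P(x,y) = {((x,y),0), ((x,y),1), ((x,y+1),0), ((x+1,y),1)}`. -/
def plaqSet (v : Vertex Lx Ly) : Finset (Bond Lx Ly) :=
  {(v, 0), (v, 1), ((v.1, v.2 + 1), 0), ((v.1 + 1, v.2), 1)}

/-- The star `S(x,y) = {((x,y),0), ((x,y),1), ((x−1,y),0), ((x,y−1),1)}`. -/
def starSet (v : Vertex Lx Ly) : Finset (Bond Lx Ly) :=
  {(v, 0), (v, 1), ((v.1 - 1, v.2), 0), ((v.1, v.2 - 1), 1)}

/-- The plaquette operator `A_{(x,y)} = W_{P(x,y)}`. -/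
def Aop (v : Vertex Lx Ly) : Module.End ℂ (QubitSpace (Bond Lx Ly)) :=
  Wop (plaqSet Lx Ly v)

/-- The star operator `B_{(x,y)} = V_{S(x,y)}`. -/
def Bop (v : Vertex Lx Ly) : Module.End ℂ (QubitSpace (Bond Lx Ly)) :=
  Vop (starSet Lx Ly v)

/-- The basis vector at the all-zeros configuration. -/
def delta0 : QubitSpace (Bond Lx Ly) := fun σ => if σ = 0 then 1 else 0

/-- The star projector `(1/2)(1 + B_v)`. -/
def starProj (v : Vertex Lx Ly) : Module.End ℂ (QubitSpace (Bond Lx Ly)) :=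
  ((2 : ℂ)⁻¹) • (1 + Bop Lx Ly v)

lemma vop_commute {ι : Type*} [DecidableEq ι] (S T : Finset ι) :
    Commute (Vop S) (Vop T) := by
  apply LinearMap.ext; intro ψ; funext σ
  simp only [Module.End.mul_apply]
  show ψ (σ + indicZ2 S + indicZ2 T) = ψ (σ + indicZ2 T + indicZ2 S)
  rw [add_right_comm]

lemma starProj_commute (v w : Vertex Lx Ly) :
    Commute (starProj Lx Ly v) (starProj Lx Ly w) := by
  have h : Commute (Bop Lx Ly v) (Bop Lx Ly w) := vop_commute _ _
  have h1 : Commute (1 + Bop Lx Ly v) (1 + Bop Lx Ly w) :=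
    (Commute.one_left _).add_left (((Commute.one_right _).add_right h))
  exact (h1.smul_left _).smul_right _

/-- The (unnormalized) zero-flux ground state
`Φ = (∏_v (1/2)(1 + B_v)) δ₀` (the star projectors commute, so the product
is well-defined). -/
def Phi : QubitSpace (Bond Lx Ly) :=
  (Finset.univ.noncommProd (fun v : Vertex Lx Ly => starProj Lx Ly v)
    (fun v _ w _ _ => starProj_commute Lx Ly v w)) (delta0 Lx Ly)

/-- The norm induced by the inner product. -/
def qNorm {ι : Type*} [Fintype ι] [DecidableEq ι] (ψ : QubitSpace ι) : ℝ :=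
  Real.sqrt (qInner ψ ψ).re

set_option linter.unusedSectionVars false

section Aux
variable {ι : Type*} [DecidableEq ι]

lemma wop_apply (S : Finset ι) (ψ : QubitSpace ι) (σ : ι → ZMod 2) :
    Wop S ψ σ = (-1 : ℂ) ^ (∑ b ∈ S, σ b).val * ψ σ := rfl

lemma vop_apply (S : Finset ι) (ψ : QubitSpace ι) (σ : ι → ZMod 2) :
    Vop S ψ σ = ψ (σ + indicZ2 S) := rfl

lemma vop_sq (S : Finset ι) : Vop S * Vop S = 1 := by
  apply LinearMap.ext; intro ψ; funext σ
  simp only [Module.End.mul_apply, vop_apply, Module.End.one_apply]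
  congr 1
  funext b
  simp [add_assoc, CharTwo.add_self_eq_zero (indicZ2 S b)]

lemma wop_vop_commute {S T : Finset ι} (h : ∑ b ∈ S, indicZ2 T b = 0) :
    Commute (Wop S) (Vop T) := by
  apply LinearMap.ext; intro ψ; funext σ
  simp only [Module.End.mul_apply, wop_apply, vop_apply]
  have : ∑ b ∈ S, (σ + indicZ2 T) b = ∑ b ∈ S, σ b := by
    show ∑ b ∈ S, (σ b + indicZ2 T b) = _
    rw [Finset.sum_add_distrib, h, add_zero]
  rw [this]

end Aux

lemma wop_delta0 (Lx Ly : ℕ) [NeZero Lx] [NeZero Ly] (S : Finset (Bond Lx Ly)) :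
    Wop S (delta0 Lx Ly) = delta0 Lx Ly := by
  funext σ
  show (-1 : ℂ) ^ (∑ b ∈ S, σ b).val * (if σ = 0 then 1 else 0) = (if σ = 0 then 1 else 0)
  by_cases h : σ = 0
  · subst h; simp
  · simp [h]
lemma zmod_sub_one_ne {n : ℕ} (h : (1 : ZMod n) ≠ 0) (a : ZMod n) : a - 1 ≠ a := by
  intro hh
  apply h
  linear_combination -hh

section Parity
variable {Lx Ly : ℕ} [NeZero Lx] [NeZero Ly]

lemma mem_star0 (w : Vertex Lx Ly) (p : Vertex Lx Ly) :
    ((p, (0 : Fin 2)) ∈ starSet Lx Ly w) ↔ (p = w ∨ p = (w.1 - 1, w.2)) := by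
  simp [starSet, Prod.ext_iff]

lemma mem_star1 (w : Vertex Lx Ly) (p : Vertex Lx Ly) :
    ((p, (1 : Fin 2)) ∈ starSet Lx Ly w) ↔ (p = w ∨ p = (w.1, w.2 - 1)) := by
  simp [starSet, Prod.ext_iff]

lemma gammaV_parity (h1y : (1 : ZMod Ly) ≠ 0) (x : ZMod Lx) (w : Vertex Lx Ly) :
    ∑ b ∈ gammaV Lx Ly x, indicZ2 (starSet Lx Ly w) b = 0 := by
  have hne : w ≠ (w.1, w.2 - 1) := by
    intro h
    exact zmod_sub_one_ne h1y w.2 (congrArg Prod.snd h).symm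
  rw [gammaV, Finset.sum_filter, Fintype.sum_prod_type]
  have key : ∀ p : Vertex Lx Ly,
      (∑ i : Fin 2, if (p, i).1.1 = x ∧ (p, i).2 = 1
          then indicZ2 (starSet Lx Ly w) (p, i) else 0)
        = (if p = w then (if w.1 = x then (1 : ZMod 2) else 0) else 0)
          + (if p = (w.1, w.2 - 1) then (if w.1 = x then (1 : ZMod 2) else 0) else 0) := by
    intro p
    rw [Fin.sum_univ_two]
    by_cases hp1 : p = w <;> by_cases hp2 : p = (w.1, w.2 - 1) <;>
      simp_all [indicZ2, mem_star1]
  simp only [key]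
  rw [Finset.sum_add_distrib, Finset.sum_ite_eq' Finset.univ w,
    Finset.sum_ite_eq' Finset.univ (w.1, w.2 - 1)]
  simp [CharTwo.add_self_eq_zero]

end Parity
lemma split_or (P Q : Prop) [Decidable P] [Decidable Q] (h : ¬(P ∧ Q)) :
    (if P ∨ Q then (1 : ZMod 2) else 0) = (if P then 1 else 0) + (if Q then 1 else 0) := by
  by_cases hP : P <;> by_cases hQ : Q <;> simp_all

section Parity2
variable {Lx Ly : ℕ} [NeZero Lx] [NeZero Ly]

lemma gammaH_parity (h1x : (1 : ZMod Lx) ≠ 0) (y : ZMod Ly) (w : Vertex Lx Ly) :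
    ∑ b ∈ gammaH Lx Ly y, indicZ2 (starSet Lx Ly w) b = 0 := by
  have hne : w ≠ (w.1 - 1, w.2) := by
    intro h
    exact zmod_sub_one_ne h1x w.1 (congrArg Prod.fst h).symm
  rw [gammaH, Finset.sum_filter, Fintype.sum_prod_type]
  have key : ∀ p : Vertex Lx Ly,
      (∑ i : Fin 2, if (p, i).1.2 = y ∧ (p, i).2 = 0
          then indicZ2 (starSet Lx Ly w) (p, i) else 0)
        = (if p = w then (if w.2 = y then (1 : ZMod 2) else 0) else 0)
          + (if p = (w.1 - 1, w.2) then (if w.2 = y then (1 : ZMod 2) else 0) else 0) := by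
    intro p
    rw [Fin.sum_univ_two]
    by_cases hp1 : p = w <;> by_cases hp2 : p = (w.1 - 1, w.2) <;>
      simp_all [indicZ2, mem_star0]
  simp only [key]
  rw [Finset.sum_add_distrib, Finset.sum_ite_eq' Finset.univ w,
    Finset.sum_ite_eq' Finset.univ (w.1 - 1, w.2)]
  simp [CharTwo.add_self_eq_zero]

lemma plaq_parity (h1x : (1 : ZMod Lx) ≠ 0) (h1y : (1 : ZMod Ly) ≠ 0)
    (v w : Vertex Lx Ly) :
    ∑ b ∈ plaqSet Lx Ly v, indicZ2 (starSet Lx Ly w) b = 0 := by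
  have hx : ∀ a : ZMod Lx, a + 1 ≠ a := by
    intro a h; apply h1x; linear_combination h
  have hy : ∀ a : ZMod Ly, a + 1 ≠ a := by
    intro a h; apply h1y; linear_combination h
  have h1 : ((v, (0 : Fin 2)) : Bond Lx Ly) ∉
      ({(v, 1), ((v.1, v.2 + 1), 0), ((v.1 + 1, v.2), 1)} : Finset (Bond Lx Ly)) := by
    simp only [Finset.mem_insert, Finset.mem_singleton, Prod.ext_iff]
    push_neg
    exact ⟨fun _ => by decide, fun h => hy v.2 h.2.symm, fun _ => by decide⟩
  have h2 : ((v, (1 : Fin 2)) : Bond Lx Ly) ∉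
      ({((v.1, v.2 + 1), 0), ((v.1 + 1, v.2), 1)} : Finset (Bond Lx Ly)) := by
    simp only [Finset.mem_insert, Finset.mem_singleton, Prod.ext_iff]
    push_neg
    exact ⟨fun _ => by decide, fun h => hx v.1 h.1.symm⟩
  have h3 : (((v.1, v.2 + 1), (0 : Fin 2)) : Bond Lx Ly) ∉
      ({((v.1 + 1, v.2), 1)} : Finset (Bond Lx Ly)) := by
    simp [Prod.ext_iff]
  rw [plaqSet, Finset.sum_insert h1, Finset.sum_insert h2, Finset.sum_insert h3,
    Finset.sum_singleton]
  have hAB : ¬(v.1 = w.1 ∧ v.1 + 1 = w.1) := by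
    rintro ⟨a, b⟩; rw [← a] at b; exact hx v.1 b
  have hCD : ¬(v.2 = w.2 ∧ v.2 + 1 = w.2) := by
    rintro ⟨c, d⟩; rw [← c] at d; exact hy v.2 d
  have ht1 : indicZ2 (starSet Lx Ly w) ((v, 0) : Bond Lx Ly)
      = (if v.1 = w.1 ∧ v.2 = w.2 then (1 : ZMod 2) else 0)
        + (if v.1 + 1 = w.1 ∧ v.2 = w.2 then 1 else 0) := by
    simp only [indicZ2, mem_star0, Prod.ext_iff, eq_sub_iff_add_eq]
    exact split_or _ _ (by tauto)
  have ht2 : indicZ2 (starSet Lx Ly w) ((v, 1) : Bond Lx Ly)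
      = (if v.1 = w.1 ∧ v.2 = w.2 then (1 : ZMod 2) else 0)
        + (if v.1 = w.1 ∧ v.2 + 1 = w.2 then 1 else 0) := by
    simp only [indicZ2, mem_star1, Prod.ext_iff, eq_sub_iff_add_eq]
    exact split_or _ _ (by tauto)
  have ht3 : indicZ2 (starSet Lx Ly w) (((v.1, v.2 + 1), 0) : Bond Lx Ly)
      = (if v.1 = w.1 ∧ v.2 + 1 = w.2 then (1 : ZMod 2) else 0)
        + (if v.1 + 1 = w.1 ∧ v.2 + 1 = w.2 then 1 else 0) := by
    simp only [indicZ2, mem_star0, Prod.ext_iff, eq_sub_iff_add_eq]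
    exact split_or _ _ (by tauto)
  have ht4 : indicZ2 (starSet Lx Ly w) (((v.1 + 1, v.2), 1) : Bond Lx Ly)
      = (if v.1 + 1 = w.1 ∧ v.2 = w.2 then (1 : ZMod 2) else 0)
        + (if v.1 + 1 = w.1 ∧ v.2 + 1 = w.2 then 1 else 0) := by
    simp only [indicZ2, mem_star1, Prod.ext_iff, eq_sub_iff_add_eq]
    exact split_or _ _ (by tauto)
  rw [ht1, ht2, ht3, ht4]
  have final : ∀ a b c d : ZMod 2, (a + b) + ((a + c) + ((c + d) + (b + d))) = 0 := by
    decide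
  exact final _ _ _ _

end Parity2
section Ops
variable {Lx Ly : ℕ} [NeZero Lx] [NeZero Ly]

/-- The product of star projectors over an arbitrary finset of vertices. -/
def projProd (F : Finset (Vertex Lx Ly)) : Module.End ℂ (QubitSpace (Bond Lx Ly)) :=
  F.noncommProd (fun v => starProj Lx Ly v)
    (fun v _ w _ _ => starProj_commute Lx Ly v w)

lemma Phi_eq : Phi Lx Ly = projProd Finset.univ (delta0 Lx Ly) := rfl

lemma wop_commute_projProd {S : Finset (Bond Lx Ly)}
    (h : ∀ w : Vertex Lx Ly, ∑ b ∈ S, indicZ2 (starSet Lx Ly w) b = 0)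
    (F : Finset (Vertex Lx Ly)) :
    Commute (Wop S) (projProd F) := by
  apply Finset.noncommProd_commute
  intro w _
  have hw : Commute (Wop S) (Bop Lx Ly w) := wop_vop_commute (h w)
  have h1 : Commute (Wop S) (1 + Bop Lx Ly w) :=
    (Commute.one_right _).add_right hw
  exact h1.smul_right _

lemma wop_fixes_Phi {S : Finset (Bond Lx Ly)}
    (h : ∀ w : Vertex Lx Ly, ∑ b ∈ S, indicZ2 (starSet Lx Ly w) b = 0) :
    Wop S (Phi Lx Ly) = Phi Lx Ly := by
  rw [Phi_eq]
  have hc := (wop_commute_projProd h Finset.univ).eq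
  have h2 := congrArg (fun L : Module.End ℂ (QubitSpace (Bond Lx Ly)) =>
    L (delta0 Lx Ly)) hc
  simp only [Module.End.mul_apply] at h2
  rw [h2, wop_delta0]

lemma bop_mul_starProj (w : Vertex Lx Ly) :
    Bop Lx Ly w * starProj Lx Ly w = starProj Lx Ly w := by
  rw [starProj]
  rw [mul_smul_comm, mul_add, mul_one]
  have : Bop Lx Ly w * Bop Lx Ly w = 1 := vop_sq _
  rw [this, add_comm]

lemma projProd_univ_split (w : Vertex Lx Ly) :
    projProd (Finset.univ : Finset (Vertex Lx Ly)) =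
      starProj Lx Ly w * projProd (Finset.univ.erase w) := by
  rw [projProd, Finset.noncommProd_congr (Finset.insert_erase (Finset.mem_univ w)).symm
    (fun x _ => rfl) (fun v _ w' _ h => starProj_commute Lx Ly v w')]
  exact Finset.noncommProd_insert_of_notMem _ _ _ _ (Finset.notMem_erase w _)

lemma bop_fixes_Phi (w : Vertex Lx Ly) : Bop Lx Ly w (Phi Lx Ly) = Phi Lx Ly := by
  rw [Phi_eq, projProd_univ_split w]
  have : Bop Lx Ly w * (starProj Lx Ly w * projProd (Finset.univ.erase w))
      = starProj Lx Ly w * projProd (Finset.univ.erase w) := by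
    rw [← mul_assoc, bop_mul_starProj]
  have h2 := congrArg (fun L : Module.End ℂ (QubitSpace (Bond Lx Ly)) =>
    L (delta0 Lx Ly)) this
  simp only [Module.End.mul_apply] at h2
  exact h2

end Ops
section Pos
variable {Lx Ly : ℕ} [NeZero Lx] [NeZero Ly]

lemma starProj_apply (v : Vertex Lx Ly) (φ : QubitSpace (Bond Lx Ly))
    (σ : Bond Lx Ly → ZMod 2) :
    starProj Lx Ly v φ σ
      = (2⁻¹ : ℂ) * (φ σ + φ (σ + indicZ2 (starSet Lx Ly v))) := rfl

lemma projProd_pos (F : Finset (Vertex Lx Ly)) (ψ : QubitSpace (Bond Lx Ly))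
    (hψ : ∀ σ, 0 ≤ (ψ σ).re ∧ (ψ σ).im = 0) :
    ∀ σ, 0 ≤ (projProd F ψ σ).re ∧ (projProd F ψ σ).im = 0 ∧
      (ψ σ).re ≤ 2 ^ F.card * (projProd F ψ σ).re := by
  induction F using Finset.cons_induction with
  | empty =>
    intro σ
    refine ⟨(hψ σ).1, (hψ σ).2, ?_⟩
    have he : projProd (∅ : Finset (Vertex Lx Ly)) = 1 := Finset.noncommProd_empty _ _
    rw [he]; simp
  | cons a s ha ih =>
    intro σ
    have hsplit : projProd (Finset.cons a s ha) = starProj Lx Ly a * projProd s :=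
      Finset.noncommProd_cons _ _ _ _ _
    rw [hsplit]
    have happ : (starProj Lx Ly a * projProd s) ψ σ
        = (2⁻¹ : ℂ) * (projProd s ψ σ + projProd s ψ (σ + indicZ2 (starSet Lx Ly a))) := rfl
    obtain ⟨h1, h2, h3⟩ := ih σ
    obtain ⟨h1', h2', _⟩ := ih (σ + indicZ2 (starSet Lx Ly a))
    rw [happ]
    have hre : ((2⁻¹ : ℂ) * (projProd s ψ σ + projProd s ψ (σ + indicZ2 (starSet Lx Ly a)))).re
        = 2⁻¹ * ((projProd s ψ σ).re + (projProd s ψ (σ + indicZ2 (starSet Lx Ly a))).re) := by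
      simp [Complex.mul_re, Complex.add_re]
    have him : ((2⁻¹ : ℂ) * (projProd s ψ σ + projProd s ψ (σ + indicZ2 (starSet Lx Ly a)))).im
        = 0 := by
      simp [Complex.mul_im, Complex.add_im, h2, h2']
    refine ⟨?_, him, ?_⟩
    · rw [hre]; positivity
    · rw [hre, Finset.card_cons]
      have hp : (0 : ℝ) < 2 ^ s.card := by positivity
      have : (ψ σ).re ≤ 2 ^ s.card * ((projProd s ψ σ).re
          + (projProd s ψ (σ + indicZ2 (starSet Lx Ly a))).re) := by nlinarith
      calc (ψ σ).re ≤ _ := this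
        _ = 2 ^ (s.card + 1) * (2⁻¹ * ((projProd s ψ σ).re
            + (projProd s ψ (σ + indicZ2 (starSet Lx Ly a))).re)) := by ring

lemma Phi_ne_zero : Phi Lx Ly ≠ 0 := by
  have hδ : ∀ σ : Bond Lx Ly → ZMod 2,
      0 ≤ ((delta0 Lx Ly) σ).re ∧ ((delta0 Lx Ly) σ).im = 0 := by
    intro σ
    rw [delta0]
    split <;> simp
  have h := (projProd_pos Finset.univ (delta0 Lx Ly) hδ 0).2.2
  have h0 : ((delta0 Lx Ly) (0 : Bond Lx Ly → ZMod 2)).re = 1 := by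
    rw [delta0]; simp
  rw [h0] at h
  intro hc
  rw [Phi_eq] at hc
  have : projProd (Finset.univ : Finset (Vertex Lx Ly)) (delta0 Lx Ly) 0 = 0 :=
    congrFun hc 0
  rw [this] at h
  simp at h
  linarith

end Pos

/-- the unnormalized zero-flux toric code ground state
`Φ = (∏_v (1/2)(1 + B_v)) δ₀` is nonzero, is fixed by every plaquette operator
`A_{(x,y)}`, every star operator `B_{(x,y)}`, every vertical Wilson loop
`W_{Γ_x}` and every horizontal Wilson loop `W_{Γ^h_y}`; in particular it is a
ground state of the toric code Hamiltonian with trivial Wilson loop quantum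
numbers. -/
theorem Phi_ground_state (Lx Ly : ℕ) [NeZero Lx] [NeZero Ly]
    (hLx : 2 ≤ Lx) (hLy : 2 ≤ Ly) :
    Phi Lx Ly ≠ 0 ∧
      (∀ v : Vertex Lx Ly, Aop Lx Ly v (Phi Lx Ly) = Phi Lx Ly) ∧
      (∀ v : Vertex Lx Ly, Bop Lx Ly v (Phi Lx Ly) = Phi Lx Ly) ∧
      (∀ x : ZMod Lx, Wop (gammaV Lx Ly x) (Phi Lx Ly) = Phi Lx Ly) ∧
      (∀ y : ZMod Ly, Wop (gammaH Lx Ly y) (Phi Lx Ly) = Phi Lx Ly) := by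
  have h1x : (1 : ZMod Lx) ≠ 0 := by
    haveI : Fact (1 < Lx) := ⟨by omega⟩
    exact one_ne_zero
  have h1y : (1 : ZMod Ly) ≠ 0 := by
    haveI : Fact (1 < Ly) := ⟨by omega⟩
    exact one_ne_zero
  refine ⟨Phi_ne_zero, ?_, fun w => bop_fixes_Phi w, ?_, ?_⟩
  · intro v
    exact wop_fixes_Phi (fun w => plaq_parity h1x h1y v w)
  · intro x
    exact wop_fixes_Phi (fun w => gammaV_parity h1y x w)
  · intro y
    exact wop_fixes_Phi (fun w => gammaH_parity h1x y w)
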